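/- Let R ≥ 1 and I ⊂ ℝ an interval of length one. Let ρ : I → (0,∞) be integrable with ρ(λx+(1-λ)y) ≤ R[λρ(x)+(1-λ)ρ(y)] for all x,y ∈ I, 0 < λ < 1. Then for any absolutely continuous f : closure(I) → ℝ with f vanishing on the endpoints of I, ∫_I Λ(f) ρ ≤ (4/3) R² ∫_I Λ(f') ρ, where Λ(t) = min{|t|, t²}. -/

import Mathlib

set_option maxHeartbeats 1000000

open Set MeasureTheory

/-- Key scalar lemma: if `|v| ≤ p + q` with `p q ≥ 0` then `Λ(v) ≤ (4/3)(p² + q)`. -/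
lemma lam_le_aux (p q v : ℝ) (hp : 0 ≤ p) (hq : 0 ≤ q) (hv : |v| ≤ p + q) :
    min |v| (v ^ 2) ≤ 4 / 3 * (p ^ 2 + q) := by
  rcases le_or_gt (p + q) 1 with h1 | h1
  · have h2 : min |v| (v ^ 2) ≤ v ^ 2 := min_le_right _ _
    have h3 : v ^ 2 ≤ (p + q) ^ 2 := by
      have := abs_nonneg v
      nlinarith [sq_abs v]
    have h4 : (p + q) ^ 2 ≤ 4 / 3 * (p ^ 2 + q) := by
      nlinarith [sq_nonneg (2 * p - 1), mul_nonneg hq (sub_nonneg.2 h1), sq_nonneg (p - q),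
        mul_nonneg hp hq, sq_nonneg (p + q - 1)]
    linarith
  · have h2 : min |v| (v ^ 2) ≤ |v| := min_le_left _ _
    have h4 : p + q ≤ 4 / 3 * (p ^ 2 + q) := by
      nlinarith [sq_nonneg (2 * p - 1)]
    linarith

/-- `min(|v|,1)² + max(|v|-1,0) = min(|v|, v²)`. -/
lemma lam_split (v : ℝ) : (min |v| 1) ^ 2 + max (|v| - 1) 0 = min |v| (v ^ 2) := by
  rcases le_total |v| 1 with h | h
  · rw [min_eq_left h, max_eq_right (by linarith), sq_abs,
      min_eq_right (by nlinarith [abs_nonneg v, sq_abs v])]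
    ring
  · rw [min_eq_right h, max_eq_left (by linarith),
      min_eq_left (by nlinarith [abs_nonneg v, sq_abs v])]
    ring

/-- `min(|v|,1) + max(|v|-1,0) = |v|`. -/
lemma abs_split (v : ℝ) : min |v| 1 + max (|v| - 1) 0 = |v| := by
  rcases le_total |v| 1 with h | h
  · rw [min_eq_left h, max_eq_right (by linarith)]; ring
  · rw [min_eq_right h, max_eq_left (by linarith)]; ring

/-- Cauchy–Schwarz: `(∫_{(c,d)} g)² ≤ ∫_{(c,d)} g²` when `d - c ≤ 1`. -/
lemma sq_setIntegral_le (c d : ℝ) (hcd : c ≤ d) (hd1 : d - c ≤ 1) (g : ℝ → ℝ)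
    (hg : IntegrableOn g (Ioo c d)) (hg2 : IntegrableOn (fun t => g t ^ 2) (Ioo c d)) :
    (∫ t in Ioo c d, g t) ^ 2 ≤ ∫ t in Ioo c d, g t ^ 2 := by
  rcases eq_or_lt_of_le hcd with rfl | hlt
  · simp
  set V : ℝ := d - c with hV
  have hV0 : 0 < V := by simp [hV]; linarith
  have hVfin : volume (Ioo c d) < ⊤ := by
    rw [Real.volume_Ioo]; exact ENNReal.ofReal_lt_top
  have hVtoReal : (volume (Ioo c d)).toReal = V := by
    rw [Real.volume_Ioo, ENNReal.toReal_ofReal hV0.le]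
  set I1 : ℝ := ∫ t in Ioo c d, g t with hI1
  set I2 : ℝ := ∫ t in Ioo c d, g t ^ 2 with hI2
  have hI2nn : 0 ≤ I2 := setIntegral_nonneg measurableSet_Ioo (fun t _ => sq_nonneg _)
  set k : ℝ := I1 / V with hk
  have hnn : 0 ≤ ∫ t in Ioo c d, (g t - k) ^ 2 :=
    setIntegral_nonneg measurableSet_Ioo (fun t _ => sq_nonneg _)
  have hgk : IntegrableOn (fun t => (2 * k) * g t) (Ioo c d) := hg.const_mul _
  have hconst : IntegrableOn (fun _ : ℝ => k ^ 2) (Ioo c d) :=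
    integrableOn_const hVfin.ne
  have hexp : ∫ t in Ioo c d, (g t - k) ^ 2
      = I2 - 2 * k * I1 + k ^ 2 * V := by
    have h1 : ∀ t : ℝ, (g t - k) ^ 2 = (g t ^ 2 - (2 * k) * g t) + k ^ 2 := by
      intro t; ring
    have A : ∫ t in Ioo c d, ((g t ^ 2 - (2 * k) * g t) + k ^ 2)
        = (∫ t in Ioo c d, (g t ^ 2 - (2 * k) * g t)) + ∫ _t in Ioo c d, (k ^ 2 : ℝ) :=
      integral_add (hg2.sub hgk) hconst
    have B : ∫ t in Ioo c d, (g t ^ 2 - (2 * k) * g t)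
        = I2 - (2 * k) * I1 := by
      rw [integral_sub hg2 hgk, integral_const_mul]
    have C : ∫ _t in Ioo c d, (k ^ 2 : ℝ) = k ^ 2 * V := by
      rw [setIntegral_const, measureReal_def, hVtoReal, smul_eq_mul, mul_comm]
    calc ∫ t in Ioo c d, (g t - k) ^ 2
        = ∫ t in Ioo c d, ((g t ^ 2 - (2 * k) * g t) + k ^ 2) := by
          apply integral_congr_ae; filter_upwards with t using h1 t
      _ = I2 - 2 * k * I1 + k ^ 2 * V := by rw [A, B, C]
  rw [hexp, hk] at hnn
  have hVne : V ≠ 0 := ne_of_gt hV0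
  field_simp at hnn
  have hD : (0:ℝ) < V * V ^ 2 := by positivity
  have h7 : I1 ^ 2 ≤ I2 * V := by nlinarith [hnn, mul_pos hV0 hV0, hV0]
  nlinarith

theorem poincare_type_inequality (R a : ℝ) (hR : 1 ≤ R) (ρ : ℝ → ℝ)
    (hpos : ∀ x ∈ Icc a (a + 1), 0 < ρ x)
    (hint : IntegrableOn ρ (Icc a (a + 1)))
    (hconv : ∀ x ∈ Icc a (a + 1), ∀ y ∈ Icc a (a + 1), ∀ l : ℝ, 0 < l → l < 1 →
      ρ (l * x + (1 - l) * y) ≤ R * (l * ρ x + (1 - l) * ρ y))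
    (f f' : ℝ → ℝ)
    (hf'int : IntegrableOn f' (Icc a (a + 1)))
    (hfrep : ∀ x ∈ Icc a (a + 1), f x = ∫ t in a..x, f' t)
    (hfa : f a = 0) (hfb : f (a + 1) = 0) :
    ∫ x in a..(a + 1), min |f x| ((f x) ^ 2) * ρ x ≤
      (4 / 3) * R ^ 2 * ∫ x in a..(a + 1), min |f' x| ((f' x) ^ 2) * ρ x := by
  have hab : a ≤ a + 1 := by linarith
  have hR0 : (0:ℝ) ≤ R := by linarith
  have haI : a ∈ Icc a (a + 1) := ⟨le_refl _, hab⟩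
  have hbI : a + 1 ∈ Icc a (a + 1) := ⟨hab, le_refl _⟩
  -- convexity consequence
  have key : ∀ t u x : ℝ, t ∈ Icc a (a + 1) → u ∈ Icc a (a + 1) → t < x → x < u →
      ρ x ≤ R * (ρ t + ρ u) := by
    intro t u x ht hu htx hxu
    have h1 : 0 < u - t := by linarith
    set lam : ℝ := (u - x) / (u - t) with hlam
    have hl0 : 0 < lam := div_pos (by linarith) h1
    have hl1 : lam < 1 := (div_lt_one h1).2 (by linarith)
    have hcomb : lam * t + (1 - lam) * u = x := by
      rw [hlam]; field_simp; ring
    have hc := hconv t ht u hu lam hl0 hl1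
    rw [hcomb] at hc
    have hρt := (hpos t ht).le
    have hρu := (hpos u hu).le
    nlinarith [mul_nonneg (mul_nonneg hR0 (by linarith : (0:ℝ) ≤ 1 - lam)) hρt,
      mul_nonneg (mul_nonneg hR0 hl0.le) hρu]
  -- global bound on ρ
  set M : ℝ := R * (ρ a + ρ (a + 1)) with hM
  have hρM : ∀ x ∈ Icc a (a + 1), ρ x ≤ M := by
    intro x hx
    rcases eq_or_lt_of_le hx.1 with rfl | hax
    · have := hpos _ hbI; have := hpos _ haI; rw [hM]; nlinarith
    rcases eq_or_lt_of_le hx.2 with hxb | hxb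
    · rw [hxb]; have := hpos _ hbI; have := hpos _ haI; rw [hM]; nlinarith
    · exact key a (a + 1) x haI hbI hax hxb
  -- measurability
  have hf'm : AEMeasurable f' (volume.restrict (Icc a (a + 1))) :=
    hf'int.aemeasurable
  have hρm : AEMeasurable ρ (volume.restrict (Icc a (a + 1))) := hint.aemeasurable
  set l : ℝ → ℝ := fun t => min |f' t| ((f' t) ^ 2) with hldef
  have hlnn : ∀ t, 0 ≤ l t := fun t => le_min (abs_nonneg _) (sq_nonneg _)
  have hlle : ∀ t, l t ≤ |f' t| := fun t => min_le_left _ _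
  have hf'abs : AEMeasurable (fun t => |f' t|) (volume.restrict (Icc a (a + 1))) :=
    measurable_abs.comp_aemeasurable hf'm
  have hlm : AEMeasurable l (volume.restrict (Icc a (a + 1))) :=
    hf'abs.min (hf'm.pow_const 2)
  have habs_int : IntegrableOn (fun t => |f' t|) (Icc a (a + 1)) := hf'int.abs
  have hl_int : IntegrableOn l (Icc a (a + 1)) := by
    apply Integrable.mono' habs_int
      (aestronglyMeasurable_iff_aemeasurable.2 hlm)
    filter_upwards with t
    rw [Real.norm_eq_abs, abs_of_nonneg (hlnn t)]
    exact hlle t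
  have hlρ_int : IntegrableOn (fun t => l t * ρ t) (Icc a (a + 1)) := by
    apply Integrable.mono' (habs_int.mul_const M)
      (aestronglyMeasurable_iff_aemeasurable.2 (hlm.mul hρm))
    rw [ae_restrict_iff' measurableSet_Icc]
    filter_upwards with t ht
    have h1 : 0 ≤ l t * ρ t := mul_nonneg (hlnn t) (hpos t ht).le
    rw [Real.norm_eq_abs, Pi.mul_apply, abs_of_nonneg h1]
    have := hρM t ht
    have := hpos t ht
    nlinarith [hlle t, hlnn t, abs_nonneg (f' t)]
  have hmin_int : IntegrableOn (fun t => min |f' t| 1) (Icc a (a + 1)) := by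
    apply Integrable.mono' habs_int
      (aestronglyMeasurable_iff_aemeasurable.2 (hf'abs.min aemeasurable_const))
    filter_upwards with t
    rw [Real.norm_eq_abs, abs_of_nonneg (le_min (abs_nonneg _) zero_le_one)]
    exact min_le_left _ _
  have hminsq_int : IntegrableOn (fun t => (min |f' t| 1) ^ 2) (Icc a (a + 1)) := by
    apply Integrable.mono' habs_int
      (aestronglyMeasurable_iff_aemeasurable.2
        ((hf'abs.min aemeasurable_const).pow_const 2))
    filter_upwards with t
    have h0 : (0:ℝ) ≤ min |f' t| 1 := le_min (abs_nonneg _) zero_le_one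
    have h1 : min |f' t| 1 ≤ 1 := min_le_right _ _
    have h2 : min |f' t| 1 ≤ |f' t| := min_le_left _ _
    rw [Real.norm_eq_abs, abs_of_nonneg (by positivity)]
    nlinarith
  have hmax_int : IntegrableOn (fun t => max (|f' t| - 1) 0) (Icc a (a + 1)) := by
    apply Integrable.mono' habs_int
      (aestronglyMeasurable_iff_aemeasurable.2
        ((hf'abs.sub_const 1).max aemeasurable_const))
    filter_upwards with t
    rw [Real.norm_eq_abs, abs_of_nonneg (le_max_right _ _)]
    rcases le_total (|f' t| - 1) 0 with h | h
    · rw [max_eq_right h]; exact abs_nonneg _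
    · rw [max_eq_left h]; linarith
  set E : ℝ := ∫ t in Ioc a (a + 1), l t * ρ t with hEdef
  have hEnn : 0 ≤ E :=
    setIntegral_nonneg measurableSet_Ioc
      (fun t ht => mul_nonneg (hlnn t) (hpos t (Ioc_subset_Icc_self ht)).le)
  have htot : (∫ t in a..(a + 1), f' t) = 0 := by
    rw [← hfrep (a + 1) hbI]; exact hfb
  -- the core pointwise bound
  have core : ∀ x ∈ Ioo a (a + 1), min |f x| ((f x) ^ 2) * ρ x ≤ 4 / 3 * R * E := by
    intro x hx
    obtain ⟨hax, hxb⟩ := hx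
    have hxI : x ∈ Icc a (a + 1) := ⟨hax.le, hxb.le⟩
    have hsubL : Ioo a x ⊆ Icc a (a + 1) :=
      (Ioo_subset_Icc_self).trans (Icc_subset_Icc_right hxb.le)
    have hsubR : Ioo x (a + 1) ⊆ Icc a (a + 1) :=
      (Ioo_subset_Icc_self).trans (Icc_subset_Icc_left hax.le)
    -- local integrability
    have hminLo := hmin_int.mono_set hsubL
    have hminRo := hmin_int.mono_set hsubR
    have hminsqLo := hminsq_int.mono_set hsubL
    have hminsqRo := hminsq_int.mono_set hsubR
    have hmaxLo := hmax_int.mono_set hsubL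
    have hmaxRo := hmax_int.mono_set hsubR
    have hlLo := hl_int.mono_set hsubL
    have hlRo := hl_int.mono_set hsubR
    have hlρLo := hlρ_int.mono_set hsubL
    have hlρRo := hlρ_int.mono_set hsubR
    -- quantities
    set p1 : ℝ := ∫ t in Ioo a x, min |f' t| 1 with hp1def
    set q1 : ℝ := ∫ t in Ioo a x, max (|f' t| - 1) 0 with hq1def
    set p2 : ℝ := ∫ t in Ioo x (a + 1), min |f' t| 1 with hp2def
    set q2 : ℝ := ∫ t in Ioo x (a + 1), max (|f' t| - 1) 0 with hq2def
    set nuL : ℝ := ∫ t in Ioo a x, l t with hnuLdef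
    set nuR : ℝ := ∫ t in Ioo x (a + 1), l t with hnuRdef
    set EL : ℝ := ∫ t in Ioo a x, l t * ρ t with hELdef
    set ER : ℝ := ∫ t in Ioo x (a + 1), l t * ρ t with hERdef
    have hp1nn : 0 ≤ p1 := setIntegral_nonneg measurableSet_Ioo
      (fun t _ => le_min (abs_nonneg _) zero_le_one)
    have hq1nn : 0 ≤ q1 := setIntegral_nonneg measurableSet_Ioo
      (fun t _ => le_max_right _ _)
    have hp2nn : 0 ≤ p2 := setIntegral_nonneg measurableSet_Ioo
      (fun t _ => le_min (abs_nonneg _) zero_le_one)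
    have hq2nn : 0 ≤ q2 := setIntegral_nonneg measurableSet_Ioo
      (fun t _ => le_max_right _ _)
    have hnuLnn : 0 ≤ nuL := setIntegral_nonneg measurableSet_Ioo (fun t _ => hlnn t)
    have hnuRnn : 0 ≤ nuR := setIntegral_nonneg measurableSet_Ioo (fun t _ => hlnn t)
    have hELnn : 0 ≤ EL := setIntegral_nonneg measurableSet_Ioo
      (fun t ht => mul_nonneg (hlnn t) (hpos t (hsubL ht)).le)
    have hERnn : 0 ≤ ER := setIntegral_nonneg measurableSet_Ioo
      (fun t ht => mul_nonneg (hlnn t) (hpos t (hsubR ht)).le)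
    -- representations of f x
    have hfxL : f x = ∫ t in Ioo a x, f' t := by
      rw [hfrep x hxI, intervalIntegral.integral_of_le hax.le, integral_Ioc_eq_integral_Ioo]
    have hIIL : IntervalIntegrable f' volume a x := by
      rw [intervalIntegrable_iff_integrableOn_Ioo_of_le hax.le]
      exact hf'int.mono_set hsubL
    have hIIR : IntervalIntegrable f' volume x (a + 1) := by
      rw [intervalIntegrable_iff_integrableOn_Ioo_of_le hxb.le]
      exact hf'int.mono_set hsubR
    have hfxR : f x = - ∫ t in Ioo x (a + 1), f' t := by
      have hadd := intervalIntegral.integral_add_adjacent_intervals hIIL hIIR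
      rw [htot] at hadd
      have h2 : (∫ t in x..(a + 1), f' t) = ∫ t in Ioo x (a + 1), f' t := by
        rw [intervalIntegral.integral_of_le hxb.le, integral_Ioc_eq_integral_Ioo]
      rw [hfrep x hxI]
      rw [← h2]
      linarith [hadd]
    -- |f x| bounds
    have hintabsL : ∫ t in Ioo a x, |f' t| = p1 + q1 := by
      rw [hp1def, hq1def, ← integral_add hminLo hmaxLo]
      apply integral_congr_ae
      filter_upwards with t using (abs_split (f' t)).symm
    have hintabsR : ∫ t in Ioo x (a + 1), |f' t| = p2 + q2 := by
      rw [hp2def, hq2def, ← integral_add hminRo hmaxRo]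
      apply integral_congr_ae
      filter_upwards with t using (abs_split (f' t)).symm
    have habsL : |f x| ≤ p1 + q1 := by
      rw [hfxL, ← hintabsL]
      calc |∫ t in Ioo a x, f' t| ≤ ∫ t in Ioo a x, |f' t| := by
            simpa [Real.norm_eq_abs] using
              norm_integral_le_integral_norm (μ := volume.restrict (Ioo a x)) f'
        _ = ∫ t in Ioo a x, |f' t| := rfl
    have habsR : |f x| ≤ p2 + q2 := by
      rw [hfxR, abs_neg, ← hintabsR]
      calc |∫ t in Ioo x (a + 1), f' t| ≤ ∫ t in Ioo x (a + 1), |f' t| := by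
            simpa [Real.norm_eq_abs] using
              norm_integral_le_integral_norm (μ := volume.restrict (Ioo x (a + 1))) f'
        _ = ∫ t in Ioo x (a + 1), |f' t| := rfl
    -- Cauchy–Schwarz
    have hCSL : p1 ^ 2 ≤ ∫ t in Ioo a x, (min |f' t| 1) ^ 2 :=
      sq_setIntegral_le a x hax.le (by linarith) _ hminLo hminsqLo
    have hCSR : p2 ^ 2 ≤ ∫ t in Ioo x (a + 1), (min |f' t| 1) ^ 2 :=
      sq_setIntegral_le x (a + 1) hxb.le (by linarith) _ hminRo hminsqRo
    -- identities for nu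
    have hnuLid : (∫ t in Ioo a x, (min |f' t| 1) ^ 2) + q1 = nuL := by
      rw [hq1def, hnuLdef, ← integral_add hminsqLo hmaxLo]
      apply integral_congr_ae
      filter_upwards with t using lam_split (f' t)
    have hnuRid : (∫ t in Ioo x (a + 1), (min |f' t| 1) ^ 2) + q2 = nuR := by
      rw [hq2def, hnuRdef, ← integral_add hminsqRo hmaxRo]
      apply integral_congr_ae
      filter_upwards with t using lam_split (f' t)
    -- Λ(f x) ≤ (4/3) ν on both sides
    have hWL : min |f x| ((f x) ^ 2) ≤ 4 / 3 * nuL := by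
      have h := lam_le_aux p1 q1 (f x) hp1nn hq1nn habsL
      have h2 : p1 ^ 2 + q1 ≤ nuL := by linarith
      linarith
    have hWR : min |f x| ((f x) ^ 2) ≤ 4 / 3 * nuR := by
      have h := lam_le_aux p2 q2 (f x) hp2nn hq2nn habsR
      have h2 : p2 ^ 2 + q2 ≤ nuR := by linarith
      linarith
    -- the convexity double bound
    have hinner : ∀ u ∈ Ioo x (a + 1), ρ x * nuL ≤ R * (EL + nuL * ρ u) := by
      intro u hu
      have huI : u ∈ Icc a (a + 1) := hsubR hu
      have hLHS : ∫ t in Ioo a x, ρ x * l t = ρ x * nuL := by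
        rw [integral_const_mul, hnuLdef]
      have hRHS : ∫ t in Ioo a x, R * (l t * ρ t + l t * ρ u) = R * (EL + nuL * ρ u) := by
        rw [integral_const_mul]
        congr 1
        rw [integral_add hlρLo (hlLo.mul_const (ρ u)), integral_mul_const, hELdef, hnuLdef]
      have hmono : ∫ t in Ioo a x, ρ x * l t
          ≤ ∫ t in Ioo a x, R * (l t * ρ t + l t * ρ u) := by
        apply setIntegral_mono_on (hlLo.const_mul _)
          ((hlρLo.add (hlLo.mul_const _)).const_mul _) measurableSet_Ioo
        intro t ht
        have htI : t ∈ Icc a (a + 1) := hsubL ht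
        have hk := key t u x htI huI ht.2 hu.1
        calc ρ x * l t = l t * ρ x := mul_comm _ _
          _ ≤ l t * (R * (ρ t + ρ u)) := mul_le_mul_of_nonneg_left hk (hlnn t)
          _ = R * (l t * ρ t + l t * ρ u) := by ring
      rw [hLHS, hRHS] at hmono
      exact hmono
    have houter : ρ x * nuL * nuR ≤ R * (EL * nuR + nuL * ER) := by
      have hLHS : ∫ u in Ioo x (a + 1), l u * (ρ x * nuL) = nuR * (ρ x * nuL) := by
        rw [integral_mul_const, hnuRdef]
      have hRHS : ∫ u in Ioo x (a + 1), ((R * EL) * l u + (R * nuL) * (l u * ρ u))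
          = R * EL * nuR + R * nuL * ER := by
        rw [integral_add (hlRo.const_mul _) (hlρRo.const_mul _), integral_const_mul,
          integral_const_mul, hnuRdef, hERdef]
      have hmono : ∫ u in Ioo x (a + 1), l u * (ρ x * nuL)
          ≤ ∫ u in Ioo x (a + 1), ((R * EL) * l u + (R * nuL) * (l u * ρ u)) := by
        apply setIntegral_mono_on (hlRo.mul_const _)
          ((hlRo.const_mul _).add (hlρRo.const_mul _)) measurableSet_Ioo
        intro u hu
        have h2 := hinner u hu
        calc l u * (ρ x * nuL) ≤ l u * (R * (EL + nuL * ρ u)) :=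
              mul_le_mul_of_nonneg_left h2 (hlnn u)
          _ = (R * EL) * l u + (R * nuL) * (l u * ρ u) := by ring
      rw [hLHS, hRHS] at hmono
      calc ρ x * nuL * nuR = nuR * (ρ x * nuL) := by ring
        _ ≤ R * EL * nuR + R * nuL * ER := hmono
        _ = R * (EL * nuR + nuL * ER) := by ring
    -- splitting E
    have hEsplit : EL + ER = E := by
      have h1 : (∫ t in Ioc a x, l t * ρ t) = EL := by
        rw [integral_Ioc_eq_integral_Ioo, hELdef]
      have h2 : (∫ t in Ioc x (a + 1), l t * ρ t) = ER := by
        rw [integral_Ioc_eq_integral_Ioo, hERdef]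
      rw [hEdef, ← Ioc_union_Ioc_eq_Ioc hax.le hxb.le,
        setIntegral_union (Ioc_disjoint_Ioc_of_le le_rfl) measurableSet_Ioc
          (hlρ_int.mono_set ((Ioc_subset_Icc_self).trans (Icc_subset_Icc_right hxb.le)))
          (hlρ_int.mono_set ((Ioc_subset_Icc_self).trans (Icc_subset_Icc_left hax.le))),
        h1, h2]
    -- conclusion
    have hWnn : 0 ≤ min |f x| ((f x) ^ 2) := le_min (abs_nonneg _) (sq_nonneg _)
    have hρx : 0 ≤ ρ x := (hpos x hxI).le
    rcases le_total nuL nuR with hLR | hLR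
    · rcases eq_or_lt_of_le hnuRnn with h0 | h0
      · have hnuL0 : nuL = 0 := le_antisymm (hLR.trans h0.symm.le) hnuLnn
        have hW0 : min |f x| ((f x) ^ 2) = 0 := by
          rw [hnuL0] at hWL
          linarith [hWnn]
        rw [hW0, zero_mul]
        positivity
      · have hdiv : ρ x * nuL ≤ R * E := by
          have h5 : ρ x * nuL * nuR ≤ (R * (EL + ER)) * nuR := by
            calc ρ x * nuL * nuR ≤ R * (EL * nuR + nuL * ER) := houter
              _ ≤ R * (EL * nuR + nuR * ER) :=
                  mul_le_mul_of_nonneg_left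
                    (add_le_add_right (mul_le_mul_of_nonneg_right hLR hERnn) _) hR0
              _ = (R * (EL + ER)) * nuR := by ring
          have := le_of_mul_le_mul_right h5 h0
          rw [hEsplit] at this
          exact this
        calc min |f x| ((f x) ^ 2) * ρ x ≤ (4 / 3 * nuL) * ρ x :=
              mul_le_mul_of_nonneg_right hWL hρx
          _ = 4 / 3 * (ρ x * nuL) := by ring
          _ ≤ 4 / 3 * (R * E) := by linarith
          _ = 4 / 3 * R * E := by ring
    · rcases eq_or_lt_of_le hnuLnn with h0 | h0
      · have hnuR0 : nuR = 0 := le_antisymm (hLR.trans h0.symm.le) hnuRnn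
        have hW0 : min |f x| ((f x) ^ 2) = 0 := by
          rw [hnuR0] at hWR
          linarith [hWnn]
        rw [hW0, zero_mul]
        positivity
      · have hdiv : ρ x * nuR ≤ R * E := by
          have h5 : (ρ x * nuR) * nuL ≤ (R * (EL + ER)) * nuL := by
            calc (ρ x * nuR) * nuL = ρ x * nuL * nuR := by ring
              _ ≤ R * (EL * nuR + nuL * ER) := houter
              _ ≤ R * (EL * nuL + nuL * ER) :=
                  mul_le_mul_of_nonneg_left
                    (add_le_add_left (mul_le_mul_of_nonneg_left hLR hELnn) _) hR0
              _ = (R * (EL + ER)) * nuL := by ring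
          have := le_of_mul_le_mul_right h5 h0
          rw [hEsplit] at this
          exact this
        calc min |f x| ((f x) ^ 2) * ρ x ≤ (4 / 3 * nuR) * ρ x :=
              mul_le_mul_of_nonneg_right hWR hρx
          _ = 4 / 3 * (ρ x * nuR) := by ring
          _ ≤ 4 / 3 * (R * E) := by linarith
          _ = 4 / 3 * R * E := by ring
  -- final assembly
  rw [intervalIntegral.integral_of_le hab, intervalIntegral.integral_of_le hab]
  have hvol : (volume (Ioo a (a + 1))).toReal = 1 := by
    rw [Real.volume_Ioo]
    norm_num
  have hfin : volume (Ioo a (a + 1)) < ⊤ := by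
    rw [Real.volume_Ioo]; exact ENNReal.ofReal_lt_top
  have hCnn : 0 ≤ 4 / 3 * R * E := by positivity
  have step : ∫ x in Ioc a (a + 1), min |f x| ((f x) ^ 2) * ρ x ≤ 4 / 3 * R * E := by
    rw [integral_Ioc_eq_integral_Ioo]
    have hb := norm_setIntegral_le_of_norm_le_const (μ := volume) (s := Ioo a (a + 1))
      (C := 4 / 3 * R * E) (f := fun x => min |f x| ((f x) ^ 2) * ρ x) hfin
      (by
        intro x hx
        rw [Real.norm_eq_abs, abs_of_nonneg
          (mul_nonneg (le_min (abs_nonneg _) (sq_nonneg _)) (hpos x (Ioo_subset_Icc_self hx)).le)]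
        exact core x hx)
    rw [measureReal_def, hvol, mul_one] at hb
    calc ∫ x in Ioo a (a + 1), min |f x| ((f x) ^ 2) * ρ x
        ≤ ‖∫ x in Ioo a (a + 1), min |f x| ((f x) ^ 2) * ρ x‖ := le_abs_self _
      _ ≤ 4 / 3 * R * E := hb
  calc ∫ x in Ioc a (a + 1), min |f x| ((f x) ^ 2) * ρ x ≤ 4 / 3 * R * E := step
    _ ≤ 4 / 3 * R ^ 2 * E := by nlinarith
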